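/- arXiv:2402.11069 — 2 statements merged into one kernel-verified Lean document; each statement's English description precedes it below -/
import Mathlib

section
/- The torsion of a Courant algebroid connection, defined by T_D(u,v) = D_u v − D_v u − [u,v] + ⟨Du, v⟩, is C∞(M)-multilinear in both arguments and, when all indices are lowered with the pairing, completely antisymmetric, i.e., T_D ∈ Γ(Λ³E*). -/
/-- Algebraic model of a Courant algebroid: the commutative ring `R` plays the
role of the smooth functions `C^∞(M)`, `E` plays the role of the module of
sections `Γ(E)`, and vector fields on `M` are modelled as `Derivation ℝ R R`.
The four axioms of Definition 2.1 are `jacobi`, `leibniz`, `invariance`,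
`symmetrized`; `Dop` is the operator `𝒟 = ρ^T ∘ d`, characterized by
`⟨𝒟 f, w⟩ = ρ(w) f`. -/
structure CourantAlgebroid (R : Type) [CommRing R] [Algebra ℝ R]
    (E : Type) [AddCommGroup E] [Module R E] : Type where
  bracket : E → E → E
  ip : E →ₗ[R] E →ₗ[R] R
  rho : E →ₗ[R] Derivation ℝ R R
  Dop : R → E
  ip_symm : ∀ u v, ip u v = ip v u
  ip_nondeg : ∀ u, (∀ v, ip u v = 0) → u = 0
  ip_Dop : ∀ f w, ip (Dop f) w = rho w f
  bracket_add_left : ∀ u v w, bracket (u + v) w = bracket u w + bracket v w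
  bracket_add_right : ∀ u v w, bracket u (v + w) = bracket u v + bracket u w
  jacobi : ∀ u v w, bracket u (bracket v w) = bracket (bracket u v) w + bracket v (bracket u w)
  leibniz : ∀ u (f : R) v, bracket u (f • v) = f • bracket u v + rho u f • v
  invariance : ∀ u v w, rho u (ip v w) = ip (bracket u v) w + ip v (bracket u w)
  symmetrized : ∀ u v, bracket u v + bracket v u = Dop (ip u v)

/-- A Courant algebroid connection on `E`: `C^∞`-linear in the direction,
a derivation in the second slot, and compatible with the pairing. -/
structure CAConnection (R : Type) [CommRing R] [Algebra ℝ R]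
    (E : Type) [AddCommGroup E] [Module R E]
    (CA : CourantAlgebroid R E) : Type where
  D : E → E → E
  add_left : ∀ u v w, D (u + v) w = D u w + D v w
  smul_left : ∀ (f : R) u v, D (f • u) v = f • D u v
  add_right : ∀ u v w, D u (v + w) = D u v + D u w
  leibniz : ∀ u (f : R) v, D u (f • v) = f • D u v + CA.rho u f • v
  compat : ∀ u v w, CA.rho u (CA.ip v w) = CA.ip (D u v) w + CA.ip v (D u w)

/-- The torsion of a Courant algebroid connection, as a trilinear form:
`T_D(u,v,w) = ⟨D_u v − D_v u − [u,v], w⟩ + ⟨D_w u, v⟩`. -/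
def torsion {R : Type} [CommRing R] [Algebra ℝ R]
    {E : Type} [AddCommGroup E] [Module R E]
    {CA : CourantAlgebroid R E} (D : CAConnection R E CA) (u v w : E) : R :=
  CA.ip (D.D u v - D.D v u - CA.bracket u v) w + CA.ip (D.D w u) v

section helpers
variable {R : Type} [CommRing R] [Algebra ℝ R]
    {E : Type} [AddCommGroup E] [Module R E]
    {CA : CourantAlgebroid R E} (D : CAConnection R E CA)

lemma torsion_def (u v w : E) : torsion D u v w =
    CA.ip (D.D u v) w - CA.ip (D.D v u) w - CA.ip (CA.bracket u v) w + CA.ip (D.D w u) v := by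
  simp [torsion, map_sub, LinearMap.sub_apply]

lemma ip_bracket_symm (u v w : E) :
    CA.ip (CA.bracket v u) w = CA.rho w (CA.ip u v) - CA.ip (CA.bracket u v) w := by
  have h := congrArg (fun x => CA.ip x w) (CA.symmetrized u v)
  simp only [map_add, LinearMap.add_apply, CA.ip_Dop] at h
  linear_combination h

lemma ip_bracket_smul_left (f : R) (u v w : E) :
    CA.ip (CA.bracket (f • u) v) w =
      CA.rho w f * CA.ip u v + f * CA.ip (CA.bracket u v) w - CA.rho v f * CA.ip u w := by
  have h := congrArg (fun x => CA.ip x w) (CA.symmetrized (f • u) v)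
  rw [CA.leibniz v f u] at h
  simp only [map_add, map_smul, LinearMap.add_apply, LinearMap.smul_apply, CA.ip_Dop,
    smul_eq_mul, Derivation.leibniz] at h
  have h3 := ip_bracket_symm (CA := CA) u v w
  linear_combination h - f * h3

end helpers

/-- the torsion `T_D(u,v) = D_u v − D_v u − [u,v] + ⟨Du,v⟩` of a
Courant algebroid connection is `C^∞(M)`-multilinear (additive and
`C^∞`-homogeneous in every slot of the associated trilinear form) and, with
all indices lowered by the pairing, completely antisymmetric, i.e.
`T_D ∈ Γ(Λ³E^*)`. -/
theorem torsion_tensorial_and_antisymmetric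
    (R : Type) [CommRing R] [Algebra ℝ R]
    (E : Type) [AddCommGroup E] [Module R E]
    (CA : CourantAlgebroid R E) (D : CAConnection R E CA) :
    (∀ u u' v w, torsion D (u + u') v w = torsion D u v w + torsion D u' v w) ∧
    (∀ (f : R) u v w, torsion D (f • u) v w = f * torsion D u v w) ∧
    (∀ u v v' w, torsion D u (v + v') w = torsion D u v w + torsion D u v' w) ∧
    (∀ (f : R) u v w, torsion D u (f • v) w = f * torsion D u v w) ∧
    (∀ u v w w', torsion D u v (w + w') = torsion D u v w + torsion D u v w') ∧
    (∀ (f : R) u v w, torsion D u v (f • w) = f * torsion D u v w) ∧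
    (∀ u v w, torsion D u v w = - torsion D v u w) ∧
    (∀ u v w, torsion D u v w = - torsion D u w v) := by
  refine ⟨?_, ?_, ?_, ?_, ?_, ?_, ?_, ?_⟩
  · intro u u' v w
    simp only [torsion_def, D.add_left, D.add_right, CA.bracket_add_left, map_add,
      LinearMap.add_apply]
    ring
  · intro f u v w
    simp only [torsion_def, D.smul_left, D.leibniz, ip_bracket_smul_left, map_add, map_smul,
      LinearMap.add_apply, LinearMap.smul_apply, smul_eq_mul]
    ring
  · intro u v v' w
    simp only [torsion_def, D.add_left, D.add_right, CA.bracket_add_right, map_add,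
      LinearMap.add_apply]
    ring
  · intro f u v w
    simp only [torsion_def, D.smul_left, D.leibniz, CA.leibniz, map_add, map_smul,
      LinearMap.add_apply, LinearMap.smul_apply, smul_eq_mul]
    ring
  · intro u v w w'
    simp only [torsion_def, D.add_left, map_add, LinearMap.add_apply]
    ring
  · intro f u v w
    simp only [torsion_def, D.smul_left, map_smul, LinearMap.smul_apply, smul_eq_mul]
    ring
  · intro u v w
    rw [torsion_def, torsion_def]
    have hc := D.compat w u v
    have hs : CA.ip u (D.D w v) = CA.ip (D.D w v) u := CA.ip_symm _ _
    have h5 := ip_bracket_symm (CA := CA) u v w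
    linear_combination -hc - hs - h5
  · intro u v w
    rw [torsion_def, torsion_def]
    have hc := D.compat u v w
    have hs : CA.ip v (D.D u w) = CA.ip (D.D u w) v := CA.ip_symm _ _
    have hi := CA.invariance u v w
    have hs2 : CA.ip v (CA.bracket u w) = CA.ip (CA.bracket u w) v := CA.ip_symm _ _
    linear_combination -hc - hs + hi + hs2
end

section
/- Changing the divergence changes the generalized Ricci tensor by a Lie derivative term: Rc(𝒢, div + ⟨e,·⟩) − Rc(𝒢, div) = −(1/2) ℒ_{𝒢e} 𝒢, for any generalized pseudometric 𝒢, divergence div, and section e. -/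
/-- Proposition 4.10: changing the divergence changes the
generalized Ricci tensor by a Lie derivative term:
`Rc(G, div + ⟨e,·⟩) − Rc(G, div) = −½ ℒ_{Ge} G`.
The Ricci tensor `Rc(G, div)` is encoded as the endomorphism which is
symmetric, anticommutes with `G` (only mixed components), and whose mixed
components are given by Proposition 4.7:
`⟨v₋, Rc(u₊)⟩ = div(G[v₋,u₊]) − ρ(v₋)div(u₊) − ρ(u₊)div(v₋) − 2 Tr_{V₊}[[·,v₋]₋,u₊]₊`,
the trace term being the same for both divergences.  The generalized Lie
derivative is `(ℒ_w G)x = [w, Gx] − G[w, x]`. -/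
theorem ricci_change_of_divergence
    (R : Type) [CommRing R] [Algebra ℝ R]
    (E : Type) [AddCommGroup E] [Module R E] [Module ℝ E] [IsScalarTower ℝ R E]
    (CA : CourantAlgebroid R E)
    (G : E →ₗ[R] E)
    (hGsym : ∀ x y, CA.ip (G x) y = CA.ip x (G y))
    (hGsq : ∀ x, G (G x) = x)
    (dv : E → R)
    (hdv_add : ∀ u v, dv (u + v) = dv u + dv v)
    (hdv_leibniz : ∀ (g : R) u, dv (g • u) = g * dv u + CA.rho u g)
    (e : E)
    (TrTerm : E → E → R)     -- the trace term `Tr_{V₊}[[·,v₋]₋,u₊]₊`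
    (Rc₁ Rc₂ : E → E)
    (hRc₁sym : ∀ x y, CA.ip (Rc₁ x) y = CA.ip x (Rc₁ y))
    (hRc₂sym : ∀ x y, CA.ip (Rc₂ x) y = CA.ip x (Rc₂ y))
    (hRc₁anti : ∀ x, Rc₁ (G x) = -(G (Rc₁ x)))
    (hRc₂anti : ∀ x, Rc₂ (G x) = -(G (Rc₂ x)))
    (hRc₁def : ∀ u v, G u = u → G v = -v →
      CA.ip v (Rc₁ u) = dv (G (CA.bracket v u)) - CA.rho v (dv u)
        - CA.rho u (dv v) - 2 * TrTerm v u)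
    (hRc₂def : ∀ u v, G u = u → G v = -v →
      CA.ip v (Rc₂ u) =
        (dv (G (CA.bracket v u)) + CA.ip e (G (CA.bracket v u)))
        - CA.rho v (dv u + CA.ip e u) - CA.rho u (dv v + CA.ip e v)
        - 2 * TrTerm v u) :
    ∀ x, Rc₂ x - Rc₁ x =
      -((1/2 : ℝ) • (CA.bracket (G e) (G x) - G (CA.bracket (G e) x))) := by

  have hcs : ∀ w : E, (1/2 : ℝ) • w = (algebraMap ℝ R (1/2)) • w :=
    fun w => (algebraMap_smul R _ w).symm
  set c : R := algebraMap ℝ R (1/2) with hcdef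
  have hc : c + c = 1 := by
    rw [hcdef, ← map_add]
    norm_num
  set g : E := G e with hgdef
  set F : E → E := fun z =>
    Rc₂ z - Rc₁ z + c • (CA.bracket g (G z) - G (CA.bracket g z)) with hFdef
  -- mixed pairing vanishes
  have mixed0 : ∀ u v, G u = u → G v = -v → CA.ip v u = 0 := by
    intro u v hu hv
    have h1 : CA.ip (G v) u = CA.ip v (G u) := hGsym v u
    rw [hu, hv] at h1
    have h2 : -(CA.ip v u) = CA.ip v u := by
      simpa [map_neg, LinearMap.neg_apply] using h1
    have h3 : (2:ℝ) • CA.ip v u = 0 := by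
      rw [two_smul]
      linear_combination -h2
    calc CA.ip v u = (1/2:ℝ) • ((2:ℝ) • CA.ip v u) := by rw [smul_smul]; norm_num
    _ = 0 := by rw [h3, smul_zero]
  -- extensionality helpers
  have ipext : ∀ w w' : E, (∀ y, CA.ip w y = CA.ip w' y) → w = w' := by
    intro w w' h
    have h0 : ∀ y, CA.ip (w - w') y = 0 := by
      intro y
      simp [map_sub, LinearMap.sub_apply, h y]
    exact sub_eq_zero.mp (CA.ip_nondeg _ h0)
  -- decomposition lemmas
  have hdec : ∀ y : E, c • (y + G y) + c • (y - G y) = y := by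
    intro y
    have h2 : c • y + c • y = y := by rw [← add_smul, hc, one_smul]
    have h3 : (c • y + c • G y) + (c • y - c • G y) = c • y + c • y := by abel
    rw [smul_add, smul_sub, h3, h2]
  have hGplus : ∀ y : E, G (c • (y + G y)) = c • (y + G y) := by
    intro y
    rw [map_smul, map_add, hGsq, add_comm]
  have hGminus : ∀ y : E, G (c • (y - G y)) = -(c • (y - G y)) := by
    intro y
    rw [map_smul, map_sub, hGsq, ← smul_neg, neg_sub]
  -- key bracket identity
  have key : ∀ u v, G u = u → G v = -v →
      CA.ip v (CA.bracket g u) =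
        CA.rho v (CA.ip e u) + CA.rho u (CA.ip e v)
          - CA.ip e (G (CA.bracket v u)) := by
    intro u v hu hv
    have e2 : CA.ip v u = 0 := mixed0 u v hu hv
    have e1 := CA.invariance g v u
    rw [e2, map_zero] at e1
    have pgv : CA.ip g v = -(CA.ip e v) := by
      rw [hgdef, hGsym, hv, map_neg]
    have pgu : CA.ip g u = CA.ip e u := by
      rw [hgdef, hGsym, hu]
    have e3 := CA.symmetrized g v
    have e3' : CA.ip (CA.bracket g v) u + CA.ip (CA.bracket v g) u
        = -(CA.rho u (CA.ip e v)) := by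
      have h := congrArg (fun w => CA.ip w u) e3
      simp only [map_add, LinearMap.add_apply, CA.ip_Dop, pgv, map_neg] at h
      exact h
    have e4 := CA.invariance v g u
    rw [pgu, hgdef, hGsym] at e4
    linear_combination -e1 - e3' - e4
  -- mixed component of F vanishes
  have mixedF : ∀ u v, G u = u → G v = -v → CA.ip v (F u) = 0 := by
    intro u v hu hv
    have h1 := hRc₁def u v hu hv
    have h2 := hRc₂def u v hu hv
    simp only [map_add] at h2
    have hk := key u v hu hv
    have hvG : ∀ w : E, CA.ip v (G w) = -(CA.ip v w) := by
      intro w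
      rw [← hGsym, hv, map_neg, LinearMap.neg_apply]
    simp only [hFdef, hu, map_sub, map_add, LinearMap.sub_apply, LinearMap.add_apply,
      map_smul, LinearMap.smul_apply, smul_eq_mul, hvG]
    linear_combination h2 - h1 + hk + (CA.ip v (CA.bracket g u)) * hc
  -- F is symmetric w.r.t. the pairing
  have symF : ∀ a b, CA.ip (F a) b = CA.ip a (F b) := by
    intro a b
    have i1 := CA.invariance g (G a) b
    have i2 := CA.invariance g a (G b)
    have hGab : CA.ip (G a) b = CA.ip a (G b) := hGsym a b
    rw [hGab] at i1
    have r1 : CA.ip (G (CA.bracket g a)) b = CA.ip (CA.bracket g a) (G b) :=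
      hGsym _ _
    have r2 : CA.ip a (G (CA.bracket g b)) = CA.ip (G a) (CA.bracket g b) :=
      (hGsym a _).symm
    simp only [hFdef, map_sub, map_add, LinearMap.sub_apply, LinearMap.add_apply,
      map_smul, LinearMap.smul_apply, smul_eq_mul, r1, r2]
    linear_combination (hRc₂sym a b) - (hRc₁sym a b) + c * (i2 - i1)
  -- F anticommutes with G
  have antiF : ∀ z, F (G z) = -(G (F z)) := by
    intro z
    simp only [hFdef]
    rw [hGsq, hRc₂anti, hRc₁anti]
    simp only [map_add, map_sub, map_smul, hGsq, smul_sub]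
    abel
  -- F is odd
  have negF : ∀ z, F (-z) = -(F z) := by
    intro z
    apply ipext
    intro y
    rw [symF (-z) y]
    simp [map_neg, LinearMap.neg_apply, symF z y]
  -- F vanishes on V₊
  have Fplus : ∀ u, G u = u → F u = 0 := by
    intro u hu
    apply CA.ip_nondeg
    intro y
    have h := antiF u
    rw [hu] at h
    have hFu : G (F u) = -(F u) := by
      have h2 := congrArg G h
      simpa [map_neg, hGsq] using h2
    have t1 : CA.ip (F u) (c • (y + G y)) = 0 := mixed0 _ _ (hGplus y) hFu
    have t2 : CA.ip (F u) (c • (y - G y)) = 0 := by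
      rw [CA.ip_symm]
      exact mixedF u (c • (y - G y)) hu (hGminus y)
    calc CA.ip (F u) y = CA.ip (F u) (c • (y + G y) + c • (y - G y)) := by rw [hdec y]
    _ = CA.ip (F u) (c • (y + G y)) + CA.ip (F u) (c • (y - G y)) := map_add _ _ _
    _ = 0 := by rw [t1, t2, add_zero]
  -- F vanishes everywhere
  have main : ∀ z, F z = 0 := by
    intro z
    apply CA.ip_nondeg
    intro y
    have t1 : CA.ip (F z) (c • (y + G y)) = 0 := by
      rw [symF, Fplus _ (hGplus y)]
      simp
    have t2 : CA.ip (F z) (c • (y - G y)) = 0 := by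
      have hv := hGminus y
      have hFv : G (F (c • (y - G y))) = F (c • (y - G y)) := by
        have h := antiF (-(c • (y - G y)))
        have hGv : G (-(c • (y - G y))) = c • (y - G y) := by
          rw [map_neg, hv, neg_neg]
        rw [hGv, negF] at h
        simpa [map_neg] using h.symm
      rw [symF]
      have s1 : CA.ip (c • (z + G z)) (F (c • (y - G y))) = 0 := by
        rw [← symF, Fplus _ (hGplus z)]
        simp
      have s2 : CA.ip (c • (z - G z)) (F (c • (y - G y))) = 0 :=
        mixed0 _ _ hFv (hGminus z)
      calc CA.ip z (F (c • (y - G y)))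
          = CA.ip (c • (z + G z) + c • (z - G z)) (F (c • (y - G y))) := by rw [hdec z]
      _ = CA.ip (c • (z + G z)) (F (c • (y - G y)))
          + CA.ip (c • (z - G z)) (F (c • (y - G y))) := by
            simp [map_add, LinearMap.add_apply]
      _ = 0 := by rw [s1, s2, add_zero]
    calc CA.ip (F z) y = CA.ip (F z) (c • (y + G y) + c • (y - G y)) := by rw [hdec y]
    _ = CA.ip (F z) (c • (y + G y)) + CA.ip (F z) (c • (y - G y)) := map_add _ _ _
    _ = 0 := by rw [t1, t2, add_zero]
  intro x
  have h := main x
  simp only [hFdef] at h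
  rw [hcs]
  exact eq_neg_of_add_eq_zero_left h
end
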